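/- Let σ > 0 and let X and Y be independent real random variables with X Gaussian with mean m₁ and variance σ²/2 and Y Gaussian with mean m₂ and variance σ²/2. Set a = m₁² + m₂². Then for every y ≥ 0, the probability P(√(X² + Y²) ≤ y) equals ∫₀^y (2x/σ²) e^{-(x²+a)/σ²} I₀( 2x√a/σ² ) dx; i.e., √(X²+Y²) has the Rician density with parameters √a and σ. -/

import Mathlib

open MeasureTheory ProbabilityTheory Real

/-- Modified Bessel function of the first kind, order zero: I₀(z) = ∑ (z/2)^{2m}/(m!)². -/
noncomputable def besselI0 (z : ℝ) : ℝ := ∑' m : ℕ, (z / 2) ^ (2 * m) / ((Nat.factorial m : ℝ)) ^ 2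

section RicianHelpers

open intervalIntegral Finset Set

lemma cosPowInt (n : ℕ) : ∫ θ in (-π)..π, Real.cos θ ^ n = ∫ θ in (-π)..π, Real.sin θ ^ n := by
  have h1 : ∀ θ : ℝ, Real.cos θ ^ n = Real.sin (θ + π/2) ^ n := by
    intro θ; rw [Real.sin_add_pi_div_two]
  simp_rw [h1]
  rw [intervalIntegral.integral_comp_add_right (fun θ => Real.sin θ ^ n) (π/2)]
  have hper : Function.Periodic (fun θ => Real.sin θ ^ n) (2*π) := fun x => by
    simp [Real.sin_add_two_pi]
  have := hper.intervalIntegral_add_eq (-π + π/2) (-π)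
  simpa [show -π + π/2 + 2*π = π + π/2 by ring, show -π + 2*π = π by ring] using this

lemma sinPowOddInt (n : ℕ) : ∫ θ in (-π)..π, Real.sin θ ^ (2*n+1) = 0 := by
  rw [← intervalIntegral.integral_add_adjacent_intervals (f := fun θ => Real.sin θ ^ (2*n+1)) (a := -π) (b := 0) (c := π)
    ((Real.continuous_sin.pow _).intervalIntegrable _ _)
    ((Real.continuous_sin.pow _).intervalIntegrable _ _)]
  have : ∫ θ in (-π)..(0:ℝ), Real.sin θ ^ (2*n+1)
      = ∫ θ in (0:ℝ)..π, Real.sin (-θ) ^ (2*n+1) := by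
    rw [intervalIntegral.integral_comp_neg (fun θ => Real.sin θ ^ (2*n+1))]
    norm_num
  rw [this]
  have hodd : ∀ x : ℝ, Real.sin (-x) ^ (2*n+1) = -(Real.sin x ^ (2*n+1)) := by
    intro x; rw [Real.sin_neg, Odd.neg_pow ⟨n, by ring⟩]
  simp_rw [hodd]
  rw [intervalIntegral.integral_neg]
  ring


lemma wallisProd (n : ℕ) : ∏ i ∈ range n, (2 * (i:ℝ) + 1)/(2 * i + 2)
    = (Nat.factorial (2*n) : ℝ) / (4^n * (Nat.factorial n : ℝ)^2) := by
  induction n with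
  | zero => simp
  | succ k ih =>
    rw [prod_range_succ, ih]
    have h1 : ((2*(k+1)).factorial : ℝ) = (2*k+2) * ((2*k+1) * (2*k).factorial) := by
      have : 2*(k+1) = (2*k+1)+1 := by ring
      rw [this, Nat.factorial_succ, Nat.factorial_succ]; push_cast; ring
    have h2 : ((k+1).factorial : ℝ) = (k+1) * k.factorial := by
      rw [Nat.factorial_succ]; push_cast; ring
    rw [h1, h2]
    have hk : (Nat.factorial k : ℝ) ≠ 0 := Nat.cast_ne_zero.2 (Nat.factorial_ne_zero k)
    have hk1 : (k:ℝ)+1 ≠ 0 := by positivity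
    have h4 : (4:ℝ)^k ≠ 0 := by positivity
    field_simp
    ring

lemma sinPowEvenInt (n : ℕ) : ∫ θ in (-π)..π, Real.sin θ ^ (2*n)
    = 2 * π * ((2*n).factorial : ℝ) / (4^n * ((n.factorial : ℝ))^2) := by
  have hsplit : ∫ θ in (-π)..π, Real.sin θ ^ (2*n) = 2 * ∫ θ in (0:ℝ)..π, Real.sin θ ^ (2*n) := by
    rw [← intervalIntegral.integral_add_adjacent_intervals (f := fun θ => Real.sin θ ^ (2*n)) (a := -π) (b := 0) (c := π)
      ((Real.continuous_sin.pow _).intervalIntegrable _ _)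
      ((Real.continuous_sin.pow _).intervalIntegrable _ _)]
    have : ∫ θ in (-π)..(0:ℝ), Real.sin θ ^ (2*n)
        = ∫ θ in (0:ℝ)..π, Real.sin (-θ) ^ (2*n) := by
      rw [intervalIntegral.integral_comp_neg (fun θ => Real.sin θ ^ (2*n))]
      norm_num
    rw [this]
    have heven : ∀ x : ℝ, Real.sin (-x) ^ (2*n) = Real.sin x ^ (2*n) := by
      intro x; rw [Real.sin_neg, Even.neg_pow ⟨n, by ring⟩]
    simp_rw [heven]
    ring
  rw [hsplit, integral_sin_pow_even, wallisProd]
  ring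

lemma besselSummable (z : ℝ) : Summable (fun m : ℕ => (z / 2) ^ (2 * m) / ((Nat.factorial m : ℝ)) ^ 2) := by
  apply Summable.of_nonneg_of_le (fun m => ?_) (fun m => ?_)
    (Real.summable_pow_div_factorial ((z/2)^2))
  · rw [pow_mul]; positivity
  · rw [pow_mul]
    have h0 : (1:ℝ) ≤ (m.factorial : ℝ) := by exact_mod_cast m.factorial_pos
    have h2 : (m.factorial : ℝ) ≤ ((m.factorial : ℝ))^2 := by nlinarith
    have hnum : (0:ℝ) ≤ ((z/2)^2)^m := by positivity
    exact div_le_div_of_nonneg_left hnum (by linarith) h2 |>.trans_eq rfl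

lemma besselIntegral (c : ℝ) :
    ∫ θ in (-π)..π, Real.exp (c * Real.cos θ) = 2 * π * besselI0 c := by
  have hle : (-π : ℝ) ≤ π := by linarith [pi_pos]
  have hF : ∀ (n : ℕ), Integrable (fun θ => (c * Real.cos θ)^n / n.factorial)
      (volume.restrict (Set.Ioc (-π) π)) := by
    intro n
    exact (((continuous_const.mul Real.continuous_cos).pow n).div_const _).integrableOn_Ioc
  have hμ : (volume.restrict (Set.Ioc (-π) π)) Set.univ = ENNReal.ofReal (2*π) := by
    rw [Measure.restrict_apply_univ, Real.volume_Ioc]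
    congr 1; ring
  have hbound : ∀ n : ℕ, (∫ θ in Set.Ioc (-π) π, ‖(c * Real.cos θ)^n / n.factorial‖)
      ≤ 2*π * (|c|^n / n.factorial) := by
    intro n
    have h1 : ∀ θ : ℝ, ‖(c * Real.cos θ)^n / n.factorial‖ ≤ |c|^n / n.factorial := by
      intro θ
      rw [norm_div, norm_pow, Real.norm_eq_abs, Real.norm_eq_abs, abs_mul,
        Nat.abs_cast]
      have : |c| * |Real.cos θ| ≤ |c| := by
        calc |c| * |Real.cos θ| ≤ |c| * 1 :=
          mul_le_mul_of_nonneg_left (Real.abs_cos_le_one θ) (abs_nonneg c)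
        _ = |c| := mul_one _
      gcongr
    calc (∫ θ in Set.Ioc (-π) π, ‖(c * Real.cos θ)^n / n.factorial‖)
        ≤ ∫ _ in Set.Ioc (-π) π, |c|^n / n.factorial := by
          apply integral_mono ((hF n).norm) (integrableOn_const ?_) (fun θ => h1 θ)
          rw [Real.volume_Ioc]; exact ENNReal.ofReal_ne_top
      _ = 2*π * (|c|^n / n.factorial) := by
          rw [MeasureTheory.integral_const, measureReal_def, hμ, ENNReal.toReal_ofReal (by positivity), smul_eq_mul]
  have hsum : Summable (fun n : ℕ => ∫ θ in Set.Ioc (-π) π, ‖(c * Real.cos θ)^n / n.factorial‖) := by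
    apply Summable.of_nonneg_of_le (fun n => integral_nonneg (fun θ => norm_nonneg _)) hbound
    exact (Real.summable_pow_div_factorial |c|).mul_left (2*π)
  have hswap := integral_tsum_of_summable_integral_norm hF hsum
  have hexp : ∀ θ : ℝ, (∑' n : ℕ, (c * Real.cos θ)^n / n.factorial) = Real.exp (c * Real.cos θ) := by
    intro θ; rw [Real.exp_eq_exp_ℝ, NormedSpace.exp_eq_tsum_div]
  rw [intervalIntegral.integral_of_le hle]
  have : (∫ θ in Set.Ioc (-π) π, Real.exp (c * Real.cos θ))
      = ∑' n : ℕ, ∫ θ in Set.Ioc (-π) π, (c * Real.cos θ)^n / n.factorial := by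
    rw [hswap]; exact setIntegral_congr_fun measurableSet_Ioc (fun θ _ => (hexp θ).symm)
  rw [this]
  -- compute each integral
  have hterm : ∀ n : ℕ, (∫ θ in Set.Ioc (-π) π, (c * Real.cos θ)^n / n.factorial)
      = c^n / n.factorial * ∫ θ in (-π)..π, Real.cos θ ^ n := by
    intro n
    rw [← intervalIntegral.integral_of_le hle, ← intervalIntegral.integral_const_mul]
    congr 1; ext θ; rw [mul_pow]; ring
  simp_rw [hterm]
  set g : ℕ → ℝ := fun n => c^n / n.factorial * ∫ θ in (-π)..π, Real.cos θ ^ n with hg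
  have heven : ∀ k : ℕ, g (2*k) = 2*π * ((c/2)^(2*k) / ((k.factorial : ℝ))^2) := by
    intro k
    rw [hg]
    simp only
    rw [cosPowInt, sinPowEvenInt]
    have h1 : ((2*k).factorial : ℝ) ≠ 0 := Nat.cast_ne_zero.2 (Nat.factorial_ne_zero _)
    have h2 : ((k.factorial : ℝ)) ≠ 0 := Nat.cast_ne_zero.2 (Nat.factorial_ne_zero _)
    have h3 : (c/2)^(2*k) = c^(2*k) / 4^k := by
      rw [div_pow, pow_mul, pow_mul]; norm_num
    rw [h3]
    have h4 : (4:ℝ)^k ≠ 0 := by positivity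
    field_simp
  have hodd : ∀ k : ℕ, g (2*k+1) = 0 := by
    intro k
    rw [hg]
    simp only
    rw [cosPowInt, sinPowOddInt, mul_zero]
  have hse : Summable (fun k => g (2*k)) := by
    apply Summable.congr ((besselSummable c).mul_left (2*π))
    intro k; rw [heven k]
  have hso : Summable (fun k => g (2*k+1)) := by
    apply Summable.congr summable_zero
    intro k; rw [hodd k]
  rw [← tsum_even_add_odd hse hso]
  have h5 : (∑' k, g (2*k+1)) = 0 := by
    rw [tsum_congr hodd, tsum_zero]
  have h6 : (∑' k, g (2*k)) = 2*π * besselI0 c := by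
    rw [tsum_congr heven, tsum_mul_left, besselI0]
  rw [h5, h6, add_zero]

lemma phaseShift (c φ : ℝ) :
    ∫ θ in (-π)..π, Real.exp (c * Real.cos (θ - φ)) = ∫ θ in (-π)..π, Real.exp (c * Real.cos θ) := by
  rw [intervalIntegral.integral_comp_sub_right (fun θ => Real.exp (c * Real.cos θ)) φ]
  have hper : Function.Periodic (fun θ => Real.exp (c * Real.cos θ)) (2*π) := fun x => by
    simp [Real.cos_add_two_pi]
  have := hper.intervalIntegral_add_eq (-π - φ) (-π)
  simpa [show -π - φ + 2*π = π - φ by ring, show -π + 2*π = π by ring] using this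

lemma polarRep (m₁ m₂ : ℝ) : ∃ φ : ℝ,
    m₁ = Real.sqrt (m₁^2 + m₂^2) * Real.cos φ ∧ m₂ = Real.sqrt (m₁^2 + m₂^2) * Real.sin φ := by
  have hs : Real.sqrt (m₁*m₁+m₂*m₂) = Real.sqrt (m₁^2+m₂^2) := by congr 1; ring
  refine ⟨Complex.arg ⟨m₁, m₂⟩, ?_, ?_⟩
  · have := Complex.norm_mul_cos_arg ⟨m₁, m₂⟩
    rw [Complex.norm_def, Complex.normSq_mk, hs] at this
    exact this.symm
  · have := Complex.norm_mul_sin_arg ⟨m₁, m₂⟩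
    rw [Complex.norm_def, Complex.normSq_mk, hs] at this
    exact this.symm

lemma angular (σ r s φ : ℝ) (hσ : σ ≠ 0) :
    ∫ θ in (-π)..π,
        Real.exp (-((r*Real.cos θ - s*Real.cos φ)^2 + (r*Real.sin θ - s*Real.sin φ)^2)/σ^2)
      = Real.exp (-(r^2+s^2)/σ^2) * (2*π*besselI0 (2*r*s/σ^2)) := by
  have hσ2 : (σ:ℝ)^2 ≠ 0 := pow_ne_zero _ hσ
  have key : ∀ θ : ℝ, -((r*Real.cos θ - s*Real.cos φ)^2 + (r*Real.sin θ - s*Real.sin φ)^2)/σ^2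
      = -(r^2+s^2)/σ^2 + (2*r*s/σ^2) * Real.cos (θ - φ) := by
    intro θ
    have hN : -((r*Real.cos θ - s*Real.cos φ)^2 + (r*Real.sin θ - s*Real.sin φ)^2)
        = -(r^2+s^2) + (2*r*s) * Real.cos (θ - φ) := by
      rw [Real.cos_sub]
      linear_combination (-(r^2)) * (Real.sin_sq_add_cos_sq θ) + (-(s^2)) * (Real.sin_sq_add_cos_sq φ)
    rw [hN]
    field_simp
  simp_rw [key, Real.exp_add, fun θ : ℝ => mul_comm (Real.exp (-(r^2+s^2)/σ^2))
    (Real.exp (2*r*s/σ^2 * Real.cos (θ - φ)))]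
  rw [intervalIntegral.integral_mul_const, phaseShift, besselIntegral]
  ring

theorem step16 {Ω : Type*} [MeasureSpace Ω] [IsProbabilityMeasure (ℙ : Measure Ω)]
    (σ m₁ m₂ : ℝ) (hσ : 0 < σ) (X Y : Ω → ℝ) (hX : Measurable X) (hY : Measurable Y)
    (hXlaw : Measure.map X ℙ = gaussianReal m₁ (Real.toNNReal (σ ^ 2 / 2)))
    (hYlaw : Measure.map Y ℙ = gaussianReal m₂ (Real.toNNReal (σ ^ 2 / 2)))
    (hindep : IndepFun X Y ℙ) (y : ℝ) :
    (ℙ {ω | Real.sqrt (X ω ^ 2 + Y ω ^ 2) ≤ y}).toReal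
      = ∫ p in {p : ℝ × ℝ | Real.sqrt (p.1^2 + p.2^2) ≤ y},
          (1/(π*σ^2)) * Real.exp (-((p.1-m₁)^2 + (p.2-m₂)^2)/σ^2) := by
  set v : NNReal := Real.toNNReal (σ ^ 2 / 2) with hvdef
  have hv : v ≠ 0 := by
    simp only [hvdef, ne_eq, Real.toNNReal_eq_zero, not_le]
    positivity
  set F : ℝ × ℝ → ℝ := fun p => (1/(π*σ^2)) * Real.exp (-((p.1-m₁)^2 + (p.2-m₂)^2)/σ^2)
    with hFdef
  have hvr : (v : ℝ) = σ^2/2 := Real.coe_toNNReal _ (by positivity)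
  have hFeq : ∀ p : ℝ × ℝ, gaussianPDFReal m₁ v p.1 * gaussianPDFReal m₂ v p.2 = F p := by
    intro p
    simp only [gaussianPDFReal, hFdef, hvr]
    have h2v : 2 * (σ^2/2) = σ^2 := by ring
    have hππ : 2 * π * (σ^2/2) = π * σ^2 := by ring
    rw [h2v, hππ]
    have hsq : (Real.sqrt (π * σ^2))⁻¹ * (Real.sqrt (π * σ^2))⁻¹ = (π*σ^2)⁻¹ := by
      rw [← mul_inv, Real.mul_self_sqrt (by positivity)]
    calc (Real.sqrt (π*σ^2))⁻¹ * Real.exp (-(p.1-m₁)^2/σ^2)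
          * ((Real.sqrt (π*σ^2))⁻¹ * Real.exp (-(p.2-m₂)^2/σ^2))
        = ((Real.sqrt (π*σ^2))⁻¹ * (Real.sqrt (π*σ^2))⁻¹)
            * (Real.exp (-(p.1-m₁)^2/σ^2) * Real.exp (-(p.2-m₂)^2/σ^2)) := by ring
      _ = (π*σ^2)⁻¹ * Real.exp (-(p.1-m₁)^2/σ^2 + -(p.2-m₂)^2/σ^2) := by
          rw [hsq, ← Real.exp_add]
      _ = 1/(π*σ^2) * Real.exp (-((p.1-m₁)^2 + (p.2-m₂)^2)/σ^2) := by
          rw [one_div]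
          congr 1
          ring
  set A : Set (ℝ × ℝ) := {p : ℝ × ℝ | Real.sqrt (p.1^2 + p.2^2) ≤ y} with hAdef
  have hA : MeasurableSet A := by
    have hc : Continuous fun p : ℝ × ℝ => Real.sqrt (p.1^2 + p.2^2) :=
      ((continuous_fst.pow 2).add (continuous_snd.pow 2)).sqrt
    exact measurableSet_le hc.measurable measurable_const
  -- Step 1: joint law
  have hmap : Measure.map (fun ω => (X ω, Y ω)) ℙ = (gaussianReal m₁ v).prod (gaussianReal m₂ v) := by
    rw [(indepFun_iff_map_prod_eq_prod_map_map hX.aemeasurable hY.aemeasurable).mp hindep,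
      hXlaw, hYlaw]
  have h1 : ℙ {ω | Real.sqrt (X ω ^ 2 + Y ω ^ 2) ≤ y}
      = ((gaussianReal m₁ v).prod (gaussianReal m₂ v)) A := by
    rw [← hmap, Measure.map_apply (hX.prodMk hY) hA]
    rfl
  -- Step 2: product of densities
  have hgm : Measurable (gaussianPDF m₁ v) := (measurable_gaussianPDFReal m₁ v).ennreal_ofReal
  have hgm2 : Measurable (gaussianPDF m₂ v) := (measurable_gaussianPDFReal m₂ v).ennreal_ofReal
  have hprod : (gaussianReal m₁ v).prod (gaussianReal m₂ v)
      = (volume : Measure (ℝ × ℝ)).withDensity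
          (fun p => gaussianPDF m₁ v p.1 * gaussianPDF m₂ v p.2) := by
    rw [gaussianReal_of_var_ne_zero _ hv, gaussianReal_of_var_ne_zero _ hv]
    haveI : SigmaFinite (volume.withDensity (gaussianPDF m₁ v)) := by
      rw [← gaussianReal_of_var_ne_zero _ hv]; infer_instance
    haveI : SigmaFinite (volume.withDensity (gaussianPDF m₂ v)) := by
      rw [← gaussianReal_of_var_ne_zero _ hv]; infer_instance
    rw [Measure.volume_eq_prod]
    refine Measure.prod_eq (fun st t hs ht => ?_)
    rw [withDensity_apply _ (hs.prod ht), ← Measure.prod_restrict,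
      lintegral_prod_mul hgm.aemeasurable hgm2.aemeasurable]
    rw [withDensity_apply _ hs, withDensity_apply _ ht]
  have hFi : Integrable F (volume : Measure (ℝ × ℝ)) := by
    have h0 := (integrable_gaussianPDFReal m₁ v).mul_prod (integrable_gaussianPDFReal m₂ v)
    rw [← Measure.volume_eq_prod] at h0
    exact h0.congr (Filter.Eventually.of_forall hFeq)
  have hFnn : ∀ p : ℝ × ℝ, 0 ≤ F p := by
    intro p; rw [hFdef]
    positivity
  have hlkey : ∫⁻ p in A, gaussianPDF m₁ v p.1 * gaussianPDF m₂ v p.2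
      = ENNReal.ofReal (∫ p in A, F p) := by
    have hpt : ∀ p : ℝ × ℝ, gaussianPDF m₁ v p.1 * gaussianPDF m₂ v p.2
        = ENNReal.ofReal (F p) := by
      intro p
      rw [gaussianPDF, gaussianPDF, ← ENNReal.ofReal_mul (gaussianPDFReal_nonneg _ _ _), hFeq]
    rw [lintegral_congr hpt]
    rw [← ofReal_integral_eq_lintegral_ofReal hFi.integrableOn
      (Filter.Eventually.of_forall hFnn)]
  rw [h1, hprod, withDensity_apply _ hA, hlkey,
    ENNReal.toReal_ofReal (integral_nonneg hFnn)]

theorem step7 (σ m₁ m₂ : ℝ) (hσ : 0 < σ) (y : ℝ) (hy : 0 ≤ y) :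
    ∫ p in {p : ℝ × ℝ | Real.sqrt (p.1^2 + p.2^2) ≤ y},
        (1/(π*σ^2)) * Real.exp (-((p.1-m₁)^2 + (p.2-m₂)^2)/σ^2)
      = ∫ x in (0:ℝ)..y, (2 * x / σ ^ 2) * Real.exp (-(x ^ 2 + (m₁ ^ 2 + m₂ ^ 2)) / σ ^ 2) *
          besselI0 (2 * x * Real.sqrt (m₁ ^ 2 + m₂ ^ 2) / σ ^ 2) := by
  have hπ := Real.pi_pos
  set a := m₁^2 + m₂^2 with hadef
  set s := Real.sqrt a with hsdef
  have ha : 0 ≤ a := by positivity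
  have hs2 : s^2 = a := Real.sq_sqrt ha
  set F : ℝ × ℝ → ℝ := fun p => (1/(π*σ^2)) * Real.exp (-((p.1-m₁)^2 + (p.2-m₂)^2)/σ^2)
    with hFdef
  set A : Set (ℝ × ℝ) := {p : ℝ × ℝ | Real.sqrt (p.1^2 + p.2^2) ≤ y} with hAdef
  have hA : MeasurableSet A := by
    have hc : Continuous fun p : ℝ × ℝ => Real.sqrt (p.1^2 + p.2^2) :=
      ((continuous_fst.pow 2).add (continuous_snd.pow 2)).sqrt
    exact measurableSet_le hc.measurable measurable_const
  have hFc : Continuous F := by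
    rw [hFdef]
    fun_prop
  set G : ℝ × ℝ → ℝ := A.indicator F with hGdef
  set M : ℝ := 1/(π*σ^2) with hMdef
  have hM : 0 < M := by rw [hMdef]; positivity
  have hFnn : ∀ p, 0 ≤ F p := fun p => by rw [hFdef]; positivity
  have hFle : ∀ p, F p ≤ M := by
    intro p
    rw [hFdef, hMdef]
    simp only
    have h1 : Real.exp (-((p.1-m₁)^2 + (p.2-m₂)^2)/σ^2) ≤ 1 := by
      rw [Real.exp_le_one_iff, neg_div]
      have : (0:ℝ) ≤ ((p.1-m₁)^2 + (p.2-m₂)^2)/σ^2 := by positivity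
      linarith
    calc 1/(π*σ^2) * Real.exp (-((p.1-m₁)^2 + (p.2-m₂)^2)/σ^2) ≤ 1/(π*σ^2) * 1 := by
          apply mul_le_mul_of_nonneg_left h1 (by positivity)
      _ = 1/(π*σ^2) := mul_one _
  have hGle : ∀ p, |G p| ≤ M := by
    intro p
    rw [hGdef]
    by_cases hp : p ∈ A
    · rw [Set.indicator_of_mem hp, abs_of_nonneg (hFnn p)]; exact hFle p
    · rw [Set.indicator_of_notMem hp, abs_zero]; exact hM.le
  -- the polar-side function
  have hsymm : ∀ p : ℝ × ℝ, polarCoord.symm p = (p.1 * Real.cos p.2, p.1 * Real.sin p.2) :=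
    fun p => rfl
  have hT : polarCoord.target = Set.Ioi (0:ℝ) ×ˢ Set.Ioo (-π) π := rfl
  set H : ℝ × ℝ → ℝ := fun p => p.1 * G (p.1 * Real.cos p.2, p.1 * Real.sin p.2) with hHdef
  have hGmeas : Measurable G := (hFc.measurable).indicator hA
  have hHmeas : Measurable H := by
    apply measurable_fst.mul
    exact hGmeas.comp ((measurable_fst.mul (Real.continuous_cos.measurable.comp measurable_snd)).prodMk
      (measurable_fst.mul (Real.continuous_sin.measurable.comp measurable_snd)))
  -- r > y ⇒ H (r, θ) = 0
  have hHzero : ∀ r θ : ℝ, 0 < r → y < r → H (r, θ) = 0 := by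
    intro r θ hr hyr
    rw [hHdef]
    simp only
    have hnotA : (r * Real.cos θ, r * Real.sin θ) ∉ A := by
      rw [hAdef]
      simp only [Set.mem_setOf_eq, not_le]
      have : (r * Real.cos θ)^2 + (r * Real.sin θ)^2 = r^2 := by
        have := Real.sin_sq_add_cos_sq θ
        nlinarith
      rw [this, Real.sqrt_sq hr.le]
      exact hyr
    rw [hGdef, Set.indicator_of_notMem hnotA, mul_zero]
  -- integrability of H on the target
  have ht' : MeasurableSet (Set.Ioc (0:ℝ) y ×ˢ Set.Ioo (-π) π) :=
    measurableSet_Ioc.prod measurableSet_Ioo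
  have htgt : MeasurableSet (Set.Ioi (0:ℝ) ×ˢ Set.Ioo (-π) π) :=
    measurableSet_Ioi.prod measurableSet_Ioo
  have hHbd : ∀ p ∈ Set.Ioc (0:ℝ) y ×ˢ Set.Ioo (-π) π, ‖H p‖ ≤ y * M := by
    rintro ⟨r, θ⟩ ⟨hr, -⟩
    rw [hHdef]
    simp only [Real.norm_eq_abs, abs_mul]
    have h1 : |r| ≤ y := by rw [abs_of_pos hr.1]; exact hr.2
    exact mul_le_mul h1 (hGle _) (abs_nonneg _) hy
  have hfin : (volume : Measure (ℝ × ℝ)) (Set.Ioc (0:ℝ) y ×ˢ Set.Ioo (-π) π) ≠ ⊤ := by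
    rw [Measure.volume_eq_prod, Measure.prod_prod]
    exact ENNReal.mul_ne_top (by simp) (by simp)
  have hHi' : IntegrableOn H (Set.Ioc (0:ℝ) y ×ˢ Set.Ioo (-π) π) :=
    Measure.integrableOn_of_bounded hfin hHmeas.aestronglyMeasurable
      ((ae_restrict_iff' ht').mpr (Filter.Eventually.of_forall hHbd))
  have hHi : IntegrableOn H (Set.Ioi (0:ℝ) ×ˢ Set.Ioo (-π) π) := by
    have heq : ∀ p ∈ Set.Ioi (0:ℝ) ×ˢ Set.Ioo (-π) π,
        (Set.Ioc (0:ℝ) y ×ˢ Set.Ioo (-π) π).indicator H p = H p := by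
      rintro ⟨r, θ⟩ ⟨hr, hθ⟩
      by_cases hry : r ≤ y
      · rw [Set.indicator_of_mem (by exact ⟨⟨hr, hry⟩, hθ⟩)]
      · rw [Set.indicator_of_notMem (by simp [Set.mem_prod, Set.mem_Ioc, hry]),
          hHzero r θ hr (not_le.mp hry)]
    apply IntegrableOn.congr_fun ?_ heq htgt
    exact ((integrable_indicator_iff ht').mpr hHi').integrableOn
  set h : ℝ → ℝ := fun x => 2 * x / σ ^ 2 * Real.exp (-(x ^ 2 + a) / σ ^ 2) *
      besselI0 (2 * x * s / σ ^ 2) with hhdef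
  obtain ⟨φ, hφ1, hφ2⟩ := polarRep m₁ m₂
  have hinner : ∀ r ∈ Set.Ioi (0:ℝ),
      (∫ θ in Set.Ioo (-π) π, H (r, θ)) = (Set.Iic y).indicator h r := by
    intro r hr
    rw [Set.mem_Ioi] at hr
    by_cases hry : r ≤ y
    · rw [Set.indicator_of_mem (Set.mem_Iic.mpr hry)]
      have hmem : ∀ θ : ℝ, (r * Real.cos θ, r * Real.sin θ) ∈ A := by
        intro θ
        rw [hAdef]
        simp only [Set.mem_setOf_eq]
        have hrr : (r * Real.cos θ)^2 + (r * Real.sin θ)^2 = r^2 := by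
          have := Real.sin_sq_add_cos_sq θ
          nlinarith
        rw [hrr, Real.sqrt_sq hr.le]
        exact hry
      have hHF : ∀ θ : ℝ, H (r, θ)
          = r * M * Real.exp (-((r * Real.cos θ - m₁)^2 + (r * Real.sin θ - m₂)^2)/σ^2) := by
        intro θ
        rw [hHdef]
        simp only
        rw [hGdef, Set.indicator_of_mem (hmem θ), hFdef]
        simp only
        ring
      simp_rw [hHF]
      rw [← MeasureTheory.integral_Ioc_eq_integral_Ioo,
        ← intervalIntegral.integral_of_le (by linarith : -π ≤ π),
        intervalIntegral.integral_const_mul]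
      have hs' : Real.sqrt (m₁^2+m₂^2) = s := by rw [hsdef, hadef]
      rw [hs'] at hφ1 hφ2
      conv_lhs => rw [hφ1, hφ2]
      rw [angular σ r s φ (ne_of_gt hσ), hhdef]
      simp only
      rw [← hs2]
      have hπ0 : (π:ℝ) ≠ 0 := ne_of_gt hπ
      have hσ0 : (σ:ℝ) ≠ 0 := ne_of_gt hσ
      rw [hMdef]
      field_simp
    · rw [Set.indicator_of_notMem (by simpa using hry)]
      rw [setIntegral_congr_fun measurableSet_Ioo
        (fun θ _ => hHzero r θ hr (not_le.mp hry))]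
      simp
  have hHiP : IntegrableOn H (Set.Ioi (0:ℝ) ×ˢ Set.Ioo (-π) π)
      ((volume : Measure ℝ).prod (volume : Measure ℝ)) := by
    rwa [← Measure.volume_eq_prod]
  calc ∫ p in A, F p
      = ∫ p, G p := by rw [hGdef, MeasureTheory.integral_indicator hA]
    _ = ∫ p in polarCoord.target, p.1 • G (polarCoord.symm p) :=
        (integral_comp_polarCoord_symm G).symm
    _ = ∫ p in Set.Ioi (0:ℝ) ×ˢ Set.Ioo (-π) π, H p := by
        rw [hT]
        apply setIntegral_congr_fun htgt
        intro p _
        show p.1 • G (polarCoord.symm p) = H p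
        rw [hsymm p, smul_eq_mul]
    _ = ∫ r in Set.Ioi (0:ℝ), ∫ θ in Set.Ioo (-π) π, H (r, θ) := by
        rw [Measure.volume_eq_prod, setIntegral_prod H hHiP]
    _ = ∫ r in Set.Ioi (0:ℝ), (Set.Iic y).indicator h r :=
        setIntegral_congr_fun measurableSet_Ioi hinner
    _ = ∫ r in Set.Ioi (0:ℝ) ∩ Set.Iic y, h r := setIntegral_indicator measurableSet_Iic
    _ = ∫ r in Set.Ioc (0:ℝ) y, h r := by rw [Set.Ioi_inter_Iic]
    _ = ∫ x in (0:ℝ)..y, h x := (intervalIntegral.integral_of_le hy).symm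

end RicianHelpers

/-- The norm √(X²+Y²) of two independent Gaussians with common variance σ²/2 has the
Rician density with parameters √a (a = m₁² + m₂²) and σ. -/
theorem stmt4 {Ω : Type*} [MeasureSpace Ω] [IsProbabilityMeasure (ℙ : Measure Ω)]
    (σ m₁ m₂ : ℝ) (hσ : 0 < σ) (X Y : Ω → ℝ) (hX : Measurable X) (hY : Measurable Y)
    (hXlaw : Measure.map X ℙ = gaussianReal m₁ (Real.toNNReal (σ ^ 2 / 2)))
    (hYlaw : Measure.map Y ℙ = gaussianReal m₂ (Real.toNNReal (σ ^ 2 / 2)))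
    (hindep : IndepFun X Y ℙ) (y : ℝ) (hy : 0 ≤ y) :
    (ℙ {ω | Real.sqrt (X ω ^ 2 + Y ω ^ 2) ≤ y}).toReal
      = ∫ x in (0:ℝ)..y, (2 * x / σ ^ 2) * Real.exp (-(x ^ 2 + (m₁ ^ 2 + m₂ ^ 2)) / σ ^ 2) *
          besselI0 (2 * x * Real.sqrt (m₁ ^ 2 + m₂ ^ 2) / σ ^ 2) := by
  rw [step16 σ m₁ m₂ hσ X Y hX hY hXlaw hYlaw hindep y]
  exact step7 σ m₁ m₂ hσ y hy
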